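/- Let w_1 : [t_0, T) → ℝ be absolutely continuous with w_1(t) ≠ 0 on [t_0, T), lim_{t→T} w_1(t) = 0, T < ∞, and suppose H : [t_0, T] → ℝ is bounded below, non-increasing, and satisfies Ḣ(t) ≤ −k ẇ_1(t)² / w_1(t)² a.e. for some k > 0. Then a contradiction follows; i.e., no such finite T exists. Concretely: for any t_1 ∈ [t_0, T), choosing t' maximizing w_1² on [t_1, T], one has H(T) − H(t') ≤ −k/(T − t'), which is unbounded below as t_1 → T, contradicting boundedness of H. -/

import Mathlib

/-- Finite-time escape prevention: there is no absolutely-continuous `w₁` on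
`[t₀, T)`, nonvanishing there with `w₁(T) = 0` (`T < ∞`), together with a
bounded-below, non-increasing `H` whose derivative satisfies
`Ḣ(t) ≤ −k ẇ₁(t)²/w₁(t)²` with `k > 0`.  Formally, such data yields `False`. -/
theorem stmt_9 (t0 T : ℝ) (htT : t0 < T) (w1 H : ℝ → ℝ) (k : ℝ) (hk : 0 < k)
    (hw1cont : ContinuousOn w1 (Set.Icc t0 T))
    (hw1diff : ∀ t ∈ Set.Ico t0 T, DifferentiableAt ℝ w1 t)
    (hw1ne : ∀ t ∈ Set.Ico t0 T, w1 t ≠ 0)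
    (hw1T : w1 T = 0)
    (hHcont : ContinuousOn H (Set.Icc t0 T))
    (hHdiff : ∀ t ∈ Set.Ico t0 T, DifferentiableAt ℝ H t)
    (hHmono : AntitoneOn H (Set.Icc t0 T))
    (hHbdd : ∃ c : ℝ, ∀ t ∈ Set.Icc t0 T, c ≤ H t)
    (hHder : ∀ t ∈ Set.Ico t0 T,
      deriv H t ≤ -k * (deriv w1 t) ^ 2 / (w1 t) ^ 2) :
    False := by
  obtain ⟨c, hc⟩ := hHbdd
  set ψ : ℝ → ℝ := fun t => H t - k * Real.log (w1 t ^ 2) - k * t with hψ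
  -- derivative facts on Ioo
  have hIcoIcc : Set.Ico t0 T ⊆ Set.Icc t0 T := Set.Ico_subset_Icc_self
  have hderiv : ∀ t ∈ Set.Ioo t0 T,
      HasDerivAt ψ (deriv H t - k * ((2 * w1 t ^ 1 * deriv w1 t) / (w1 t ^ 2)) - k) t := by
    intro t ht
    have ht' : t ∈ Set.Ico t0 T := ⟨le_of_lt ht.1, ht.2⟩
    have hw := (hw1diff t ht').hasDerivAt
    have hne2 : w1 t ^ 2 ≠ 0 := pow_ne_zero 2 (hw1ne t ht')
    have hlog : HasDerivAt (fun s => Real.log (w1 s ^ 2))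
        ((2 * w1 t ^ 1 * deriv w1 t) / (w1 t ^ 2)) t := (hw.pow 2).log hne2
    have hH := (hHdiff t ht').hasDerivAt
    have : HasDerivAt (fun s => H s - k * Real.log (w1 s ^ 2) - k * s)
        (deriv H t - k * ((2 * w1 t ^ 1 * deriv w1 t) / (w1 t ^ 2)) - k) t := by
      have h1 := hH.sub (hlog.const_mul k)
      have h2 := h1.sub ((hasDerivAt_id t).const_mul k)
      rw [mul_one] at h2
      exact h2
    exact this
  have hdnonpos : ∀ t ∈ Set.Ioo t0 T, deriv ψ t ≤ 0 := by
    intro t ht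
    have ht' : t ∈ Set.Ico t0 T := ⟨le_of_lt ht.1, ht.2⟩
    have hd := (hderiv t ht).deriv
    rw [hd]
    have hne : w1 t ≠ 0 := hw1ne t ht'
    have hw2 : (0:ℝ) < w1 t ^ 2 := by positivity
    have hH := hHder t ht'
    set a := deriv w1 t
    set w := w1 t
    have key : -k * a ^ 2 / w ^ 2 - k * ((2 * w ^ 1 * a) / (w ^ 2)) - k ≤ 0 := by
      have h1 : -k * a ^ 2 / w ^ 2 - k * ((2 * w ^ 1 * a) / (w ^ 2)) - k
          = (-k * (a + w) ^ 2) / w ^ 2 := by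
        field_simp
        ring
      rw [h1]
      apply div_nonpos_of_nonpos_of_nonneg _ (le_of_lt hw2)
      nlinarith [sq_nonneg (a + w)]
    linarith
  -- ψ is antitone on Ico t0 T
  have hψcont : ContinuousOn ψ (Set.Ico t0 T) := by
    apply ContinuousOn.sub
    apply ContinuousOn.sub (hHcont.mono hIcoIcc)
    · exact ContinuousOn.mul continuousOn_const
        (((hw1cont.mono hIcoIcc).pow 2).log (fun t ht => pow_ne_zero 2 (hw1ne t ht)))
    · exact continuousOn_const.mul continuousOn_id
  have hψanti : AntitoneOn ψ (Set.Ico t0 T) := by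
    apply antitoneOn_of_deriv_nonpos (convex_Ico t0 T) hψcont
    · intro t ht
      rw [interior_Ico] at ht
      exact (hderiv t ht).differentiableAt.differentiableWithinAt
    · intro t ht
      rw [interior_Ico] at ht
      exact hdnonpos t ht
  -- lower bound on w1 t ^ 2 on Ico
  set m : ℝ := (c - k * T - ψ t0) / k with hm
  have hlb : ∀ t ∈ Set.Ico t0 T, Real.exp m ≤ w1 t ^ 2 := by
    intro t ht
    have ht0 : t0 ∈ Set.Ico t0 T := ⟨le_refl _, htT⟩
    have h1 : ψ t ≤ ψ t0 := hψanti ht0 ht ht.1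
    have hct : c ≤ H t := hc t (hIcoIcc ht)
    have hkt : k * t ≤ k * T := by
      have := le_of_lt ht.2
      nlinarith
    have h1' : H t - k * Real.log (w1 t ^ 2) - k * t ≤ ψ t0 := h1
    have h2 : c - k * T - ψ t0 ≤ k * Real.log (w1 t ^ 2) := by linarith
    have h3 : m ≤ Real.log (w1 t ^ 2) := by
      rw [hm, div_le_iff₀ hk]
      linarith [h2]
    have hne : w1 t ≠ 0 := hw1ne t ht
    have hw2 : (0:ℝ) < w1 t ^ 2 := lt_of_le_of_ne (sq_nonneg _) (Ne.symm (pow_ne_zero 2 hne))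
    calc Real.exp m ≤ Real.exp (Real.log (w1 t ^ 2)) := Real.exp_le_exp.mpr h3
      _ = w1 t ^ 2 := Real.exp_log hw2
  -- contradiction with continuity at T
  have hT : T ∈ Set.Icc t0 T := ⟨le_of_lt htT, le_refl _⟩
  have htend : Filter.Tendsto (fun t => w1 t ^ 2) (nhdsWithin T (Set.Icc t0 T)) (nhds 0) := by
    have := (hw1cont T hT).tendsto
    rw [hw1T] at this
    have := this.pow 2
    simpa using this
  have hev : ∀ᶠ t in nhdsWithin T (Set.Icc t0 T), w1 t ^ 2 < Real.exp m :=
    htend.eventually_lt_const (Real.exp_pos m)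
  have hle : nhdsWithin T (Set.Ico t0 T) ≤ nhdsWithin T (Set.Icc t0 T) :=
    nhdsWithin_mono T hIcoIcc
  have hnebot : (nhdsWithin T (Set.Ico t0 T)).NeBot := by
    rw [← mem_closure_iff_nhdsWithin_neBot, closure_Ico (ne_of_lt htT)]
    exact hT
  have hev' : ∀ᶠ t in nhdsWithin T (Set.Ico t0 T), w1 t ^ 2 < Real.exp m := hev.filter_mono hle
  have hev'' : ∀ᶠ t in nhdsWithin T (Set.Ico t0 T), Real.exp m ≤ w1 t ^ 2 :=
    eventually_nhdsWithin_of_forall hlb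
  obtain ⟨t, h1, h2⟩ := (hev'.and hev'').exists
  linarith
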